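/- arXiv:2502.16728 — 5 statements merged into one kernel-verified Lean document; each statement's English description precedes it below -/
import Mathlib

section
/- Let n and m be integers with m odd, 3 ≤ m ≤ n, and let θ : {1,…,n} → ℝ be strictly positive. Define Ω_{ij} = θ_i θ_j / (1 + θ_i θ_j) for i ≠ j. Fix i1 ∈ {1,…,n} and let S = {1,…,n} \ {i1}. Then, summing over all tuples (i2, …, i_m) of pairwise distinct indices in S, ∑ Ω_{i1 i2}(1 − Ω_{i2 i3}) Ω_{i3 i4} ⋯ Ω_{i_{m-2} i_{m-1}} (1 − Ω_{i_{m-1} i_m}) Ω_{i_m i1} = θ_{i1}^2 · ∑ (1 − Ω_{i1 i2}) Ω_{i2 i3} (1 − Ω_{i3 i4}) ⋯ (1 − Ω_{i_{m-2} i_{m-1}}) Ω_{i_{m-1} i_m} (1 − Ω_{i_m i1}), where both sums are over the same set of distinct tuples and the factors alternate between Ω and 1 − Ω along the closed cycle i1 → i2 → ⋯ → i_m → i1, starting and ending with Ω in the first sum and with 1 − Ω in the second. -/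
lemma prodA (m : ℕ) (hm3 : 3 ≤ m) (hm_odd : Odd m) (h : Fin m → ℝ) :
    ∏ e : Fin m, (if e.val % 2 = 0 then h e * h ⟨(e.val + 1) % m, Nat.mod_lt _ (by omega)⟩ else 1)
      = h ⟨0, by omega⟩ * ∏ e : Fin m, h e := by
  haveI : NeZero m := ⟨by omega⟩
  have h1m : 1 % m = 1 := Nat.mod_eq_of_lt (by omega)
  have hadd : ∀ x : Fin m, (x + 1 : Fin m) = ⟨(x.val + 1) % m, Nat.mod_lt _ (by omega)⟩ := by
    intro x; ext; rw [Fin.add_def]; simp [h1m]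
  have hsub : ∀ j : Fin m, (j - 1 : Fin m).val = (m - 1 + j.val) % m := by
    intro j; rw [Fin.sub_def]; simp [Fin.val_one', h1m]
  -- split the product
  have step1 : ∀ e : Fin m,
      (if e.val % 2 = 0 then h e * h ⟨(e.val + 1) % m, Nat.mod_lt _ (by omega)⟩ else 1)
      = (if e.val % 2 = 0 then h e else 1) *
        (if e.val % 2 = 0 then h (e + 1) else 1) := by
    intro e; rw [hadd]; by_cases he : e.val % 2 = 0 <;> simp [he]
  rw [Finset.prod_congr rfl (fun e _ => step1 e), Finset.prod_mul_distrib]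
  -- reindex the second product
  have step2 : ∏ e : Fin m, (if e.val % 2 = 0 then h (e + 1) else 1)
      = ∏ j : Fin m, (if (j - 1 : Fin m).val % 2 = 0 then h j else 1) := by
    apply Fintype.prod_equiv (Equiv.addRight (1 : Fin m))
    intro x
    simp
  rw [step2, ← Finset.prod_mul_distrib]
  have step3 : ∀ j : Fin m,
      (if j.val % 2 = 0 then h j else 1) * (if (j - 1 : Fin m).val % 2 = 0 then h j else 1)
      = (if j = ⟨0, by omega⟩ then h ⟨0, by omega⟩ else 1) * h j := by
    intro j
    rw [hsub]
    obtain ⟨mo, hmo⟩ := hm_odd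
    by_cases hj : j = ⟨0, by omega⟩
    · subst hj
      have t1 : (m - 1 + (0:ℕ)) % m = m - 1 := Nat.mod_eq_of_lt (by omega)
      have t2 : (m - 1) % 2 = 0 := by omega
      simp [t1, t2]
    · have hjv : j.val ≠ 0 := fun hc => hj (Fin.ext hc)
      have hjlt := j.isLt
      have t0 : m - 1 + j.val = m + (j.val - 1) := by omega
      have : (m - 1 + j.val) % m = j.val - 1 := by
        rw [t0, Nat.add_mod_left, Nat.mod_eq_of_lt (by omega)]
      rw [this]
      rcases Nat.even_or_odd j.val with he | he
      · have h2 : j.val % 2 = 0 := Nat.even_iff.mp he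
        have h3 : ¬ (j.val - 1) % 2 = 0 := by omega
        simp [h2, h3, hj, Fin.ext_iff, hjv]
      · have h2 : ¬ j.val % 2 = 0 := by have := Nat.odd_iff.mp he; omega
        have h3 : (j.val - 1) % 2 = 0 := by have := Nat.odd_iff.mp he; omega
        simp [h2, h3, hj, Fin.ext_iff, hjv]
  rw [Finset.prod_congr rfl (fun j _ => step3 j), Finset.prod_mul_distrib,
    Finset.prod_ite_eq' Finset.univ (⟨0, by omega⟩ : Fin m) (fun _ => h ⟨0, by omega⟩)]
  simp

lemma prodA' (m : ℕ) (hm3 : 3 ≤ m) (hm_odd : Odd m) (h : Fin m → ℝ) :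
    h ⟨0, by omega⟩ *
    ∏ e : Fin m, (if e.val % 2 = 0 then 1 else h e * h ⟨(e.val + 1) % m, Nat.mod_lt _ (by omega)⟩)
      = ∏ e : Fin m, h e := by
  haveI : NeZero m := ⟨by omega⟩
  have h1m : 1 % m = 1 := Nat.mod_eq_of_lt (by omega)
  have hadd : ∀ x : Fin m, (x + 1 : Fin m) = ⟨(x.val + 1) % m, Nat.mod_lt _ (by omega)⟩ := by
    intro x; ext; rw [Fin.add_def]; simp [h1m]
  have hsub : ∀ j : Fin m, (j - 1 : Fin m).val = (m - 1 + j.val) % m := by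
    intro j; rw [Fin.sub_def]; simp [Fin.val_one', h1m]
  have step1 : ∀ e : Fin m,
      (if e.val % 2 = 0 then 1 else h e * h ⟨(e.val + 1) % m, Nat.mod_lt _ (by omega)⟩)
      = (if e.val % 2 = 0 then 1 else h e) *
        (if e.val % 2 = 0 then 1 else h (e + 1)) := by
    intro e; rw [hadd]; by_cases he : e.val % 2 = 0 <;> simp [he]
  rw [Finset.prod_congr rfl (fun e _ => step1 e), Finset.prod_mul_distrib]
  have step2 : ∏ e : Fin m, (if e.val % 2 = 0 then 1 else h (e + 1))
      = ∏ j : Fin m, (if (j - 1 : Fin m).val % 2 = 0 then 1 else h j) := by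
    apply Fintype.prod_equiv (Equiv.addRight (1 : Fin m))
    intro x
    simp
  rw [step2, ← Finset.prod_mul_distrib]
  have step3 : ∀ j : Fin m,
      (if j.val % 2 = 0 then 1 else h j) * (if (j - 1 : Fin m).val % 2 = 0 then 1 else h j)
      = (if j = ⟨0, by omega⟩ then 1 else h j) := by
    intro j
    rw [hsub]
    obtain ⟨mo, hmo⟩ := hm_odd
    by_cases hj : j = ⟨0, by omega⟩
    · subst hj
      have t1 : (m - 1 + (0:ℕ)) % m = m - 1 := Nat.mod_eq_of_lt (by omega)
      have t2 : (m - 1) % 2 = 0 := by omega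
      simp [t1, t2]
    · have hjv : j.val ≠ 0 := fun hc => hj (Fin.ext hc)
      have hjlt := j.isLt
      have t0 : m - 1 + j.val = m + (j.val - 1) := by omega
      have : (m - 1 + j.val) % m = j.val - 1 := by
        rw [t0, Nat.add_mod_left, Nat.mod_eq_of_lt (by omega)]
      rw [this]
      rcases Nat.even_or_odd j.val with he | he
      · have h2 : j.val % 2 = 0 := Nat.even_iff.mp he
        have h3 : ¬ (j.val - 1) % 2 = 0 := by omega
        simp [h2, h3, hj, Fin.ext_iff, hjv]
      · have h2 : ¬ j.val % 2 = 0 := by have := Nat.odd_iff.mp he; omega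
        have h3 : (j.val - 1) % 2 = 0 := by have := Nat.odd_iff.mp he; omega
        simp [h2, h3, hj, Fin.ext_iff, hjv]
  rw [Finset.prod_congr rfl (fun j _ => step3 j)]
  set z : Fin m := ⟨0, by omega⟩ with hz
  have e1 : (∏ j : Fin m, if j = z then (1:ℝ) else h j)
      = ∏ j ∈ Finset.univ.erase z, h j := by
    rw [show (∏ j : Fin m, if j = z then (1:ℝ) else h j)
        = ∏ j ∈ Finset.univ.erase z, (if j = z then (1:ℝ) else h j) from
      (Finset.prod_erase _ (by simp)).symm]
    exact Finset.prod_congr rfl fun j hj => by simp [Finset.ne_of_mem_erase hj]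
  rw [e1, Finset.mul_prod_erase Finset.univ h (Finset.mem_univ z)]


/-- Lemma 2, cancellation trick for the β-model.
For odd `m` with `3 ≤ m ≤ n`, strictly positive `θ`, and `Ω i j = θ i θ j / (1 + θ i θ j)`
for `i ≠ j`, the alternating cycle sum starting/ending with `Ω` equals `θ i1 ^ 2` times the
alternating cycle sum starting/ending with `1 - Ω`, where both sums range over tuples
`(i2, …, i_m)` of pairwise distinct indices different from `i1` (encoded as injective maps
`g : Fin m → Fin n` with `g 0 = i1`, the cycle being `g 0 → g 1 → ⋯ → g (m-1) → g 0`). -/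
theorem statement2 (n m : ℕ) (hm_odd : Odd m) (hm3 : 3 ≤ m) (hmn : m ≤ n)
    (θ : Fin n → ℝ) (hθ : ∀ i, 0 < θ i)
    (Ω : Fin n → Fin n → ℝ)
    (hΩ : ∀ i j, i ≠ j → Ω i j = θ i * θ j / (1 + θ i * θ j))
    (i1 : Fin n) :
    ∑ g ∈ Finset.univ.filter
        (fun g : Fin m → Fin n => Function.Injective g ∧ g ⟨0, by omega⟩ = i1),
      ∏ e : Fin m,
        (if e.val % 2 = 0 then Ω (g e) (g ⟨(e.val + 1) % m, Nat.mod_lt _ (by omega)⟩)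
         else 1 - Ω (g e) (g ⟨(e.val + 1) % m, Nat.mod_lt _ (by omega)⟩))
    = θ i1 ^ 2 *
      ∑ g ∈ Finset.univ.filter
          (fun g : Fin m → Fin n => Function.Injective g ∧ g ⟨0, by omega⟩ = i1),
        ∏ e : Fin m,
          (if e.val % 2 = 0 then 1 - Ω (g e) (g ⟨(e.val + 1) % m, Nat.mod_lt _ (by omega)⟩)
           else Ω (g e) (g ⟨(e.val + 1) % m, Nat.mod_lt _ (by omega)⟩)) := by
  rw [Finset.mul_sum]
  refine Finset.sum_congr rfl fun g hg => ?_
  obtain ⟨hginj, hg0⟩ := (Finset.mem_filter.mp hg).2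
  set h : Fin m → ℝ := fun e => θ (g e) with hh
  set s : Fin m → Fin m := fun e => ⟨(e.val + 1) % m, Nat.mod_lt _ (by omega)⟩ with hs
  have hne : ∀ e : Fin m, g e ≠ g (s e) := by
    intro e hc
    have := hginj hc
    have hv : e.val = (e.val + 1) % m := congrArg Fin.val this
    rcases Nat.lt_or_ge (e.val + 1) m with hlt | hge
    · rw [Nat.mod_eq_of_lt hlt] at hv; omega
    · have he1 : e.val + 1 = m := by have := e.isLt; omega
      rw [he1, Nat.mod_self] at hv; omega
  have hpos : ∀ e : Fin m, (0:ℝ) < 1 + h e * h (s e) := by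
    intro e
    have := hθ (g e); have := hθ (g (s e))
    nlinarith
  have keyF : ∀ e : Fin m,
      (if e.val % 2 = 0 then Ω (g e) (g ⟨(e.val + 1) % m, Nat.mod_lt _ (by omega)⟩)
        else 1 - Ω (g e) (g ⟨(e.val + 1) % m, Nat.mod_lt _ (by omega)⟩))
      = (if e.val % 2 = 0 then h e * h (s e) else 1) * (1 + h e * h (s e))⁻¹ := by
    intro e
    have hΩe : Ω (g e) (g (s e)) = h e * h (s e) / (1 + h e * h (s e)) := hΩ _ _ (hne e)
    have hp := hpos e
    have hΩe' : Ω (g e) (g ⟨(e.val + 1) % m, Nat.mod_lt _ (by omega)⟩) = h e * h (s e) / (1 + h e * h (s e)) := hΩe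
    by_cases hc : e.val % 2 = 0 <;> simp only [hc, if_true, if_false, hΩe', ite_true, ite_false]
    · rw [div_eq_mul_inv]
    · field_simp; ring
  have keyG : ∀ e : Fin m,
      (if e.val % 2 = 0 then 1 - Ω (g e) (g ⟨(e.val + 1) % m, Nat.mod_lt _ (by omega)⟩)
        else Ω (g e) (g ⟨(e.val + 1) % m, Nat.mod_lt _ (by omega)⟩))
      = (if e.val % 2 = 0 then 1 else h e * h (s e)) * (1 + h e * h (s e))⁻¹ := by
    intro e
    have hΩe : Ω (g e) (g (s e)) = h e * h (s e) / (1 + h e * h (s e)) := hΩ _ _ (hne e)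
    have hp := hpos e
    have hΩe' : Ω (g e) (g ⟨(e.val + 1) % m, Nat.mod_lt _ (by omega)⟩) = h e * h (s e) / (1 + h e * h (s e)) := hΩe
    by_cases hc : e.val % 2 = 0 <;> simp only [hc, if_true, if_false, hΩe', ite_true, ite_false]
    · field_simp; ring
    · rw [div_eq_mul_inv]
  rw [Finset.prod_congr rfl (fun e _ => keyF e), Finset.prod_congr rfl (fun e _ => keyG e),
    Finset.prod_mul_distrib, Finset.prod_mul_distrib]
  have hA := prodA m hm3 hm_odd h
  have hA' := prodA' m hm3 hm_odd h
  have h0 : h ⟨0, by omega⟩ = θ i1 := by rw [hh]; simp [hg0]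
  rw [h0] at hA hA'
  rw [hA, ← hA']
  ring
end

section
/- Let S be a finite set, let i be an element not in S, let θ be a strictly positive real-valued function on S ∪ {i}, and let p > 0. Define Ω_{ij} = p θ_i θ_j / (1 + p θ_i θ_j) for j ∈ S (and set Ω_{ji} = Ω_{ij}), and Ω_{jt} = θ_j θ_t / (1 + θ_j θ_t) for distinct j, t ∈ S. Then ∑_{j ≠ t ∈ S} Ω_{ij}(1 − Ω_{jt}) Ω_{ti} = θ_i^2 p^2 · ∑_{j ≠ t ∈ S} (1 − Ω_{ij}) Ω_{jt} (1 − Ω_{ti}). -/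
/-- cross-community cycle identity.
Let `S` be a finite set, `i ∉ S`, `θ` strictly positive on `S ∪ {i}` and `p > 0`.
With `Ω_{ij} = p θ_i θ_j / (1 + p θ_i θ_j)` for `j ∈ S` (symmetric) and
`Ω_{jt} = θ_j θ_t / (1 + θ_j θ_t)` for distinct `j, t ∈ S`, the alternating 3-cycle
sums satisfy `∑ Ω_{ij}(1 − Ω_{jt})Ω_{ti} = θ_i² p² ∑ (1 − Ω_{ij})Ω_{jt}(1 − Ω_{ti})`,
both sums taken over ordered pairs of distinct `j, t ∈ S`. -/
theorem statement3 {α : Type*} [DecidableEq α] (S : Finset α) (i : α) (hi : i ∉ S)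
    (θ : α → ℝ) (hθ : ∀ j ∈ insert i S, 0 < θ j) (p : ℝ) (hp : 0 < p) :
    ∑ j ∈ S, ∑ t ∈ S.erase j,
        (p * θ i * θ j / (1 + p * θ i * θ j)) *
          (1 - θ j * θ t / (1 + θ j * θ t)) *
            (p * θ t * θ i / (1 + p * θ t * θ i))
      = θ i ^ 2 * p ^ 2 *
        ∑ j ∈ S, ∑ t ∈ S.erase j,
          (1 - p * θ i * θ j / (1 + p * θ i * θ j)) *
            (θ j * θ t / (1 + θ j * θ t)) *
              (1 - p * θ t * θ i / (1 + p * θ t * θ i)) := by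
  rw [Finset.mul_sum]
  refine Finset.sum_congr rfl fun j hj => ?_
  rw [Finset.mul_sum]
  refine Finset.sum_congr rfl fun t ht => ?_
  have hθi := hθ i (Finset.mem_insert_self i S)
  have hθj := hθ j (Finset.mem_insert_of_mem hj)
  have hθt := hθ t (Finset.mem_insert_of_mem (Finset.mem_of_mem_erase ht))
  have h1 : (1 : ℝ) + p * θ i * θ j ≠ 0 := by positivity
  have h2 : (1 : ℝ) + θ j * θ t ≠ 0 := by positivity
  have h3 : (1 : ℝ) + p * θ t * θ i ≠ 0 := by positivity
  field_simp
  ring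
end

section
/- Let K ≥ 2, n ≥ 1, c0 > 0, α > 0. Let π : {1,…,n} → {1,…,K} be a labeling with each label class of size at least α n, and let r_1, …, r_K ∈ ℝ^{K−1} be pairwise at Euclidean distance at least √2 · c0. Let R ∈ ℝ^{n×(K−1)} be the matrix whose i-th row is r_{π(i)}. Let R̂ ∈ ℝ^{n×(K−1)} satisfy ‖R̂ − R‖_F^2 < α n c0^2 / 160. Let M ∈ ℝ^{n×(K−1)} be any matrix having at most K distinct rows with ‖R̂ − M‖_F ≤ ‖R̂ − R‖_F (as is satisfied by the rows-of-cluster-centers matrix of an optimal K-means solution applied to the rows of R̂). Then there exists an injective map ℓ from the set of distinct rows of M to {1, …, K} such that #{ i : ℓ(m_i) ≠ π(i) } ≤ (160 / c0^2) · ‖R̂ − R‖_F^2, where m_i denotes the i-th row of M. -/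
/-- deterministic k-means / Hamming-error lemma.
If the population SCORE matrix `R` has rows `r (π i)` with the `K` centers `r k` pairwise
at distance at least `√2 · c0`, every community has at least `α n` nodes,
`‖R̂ − R‖_F² < α n c0²/160`, and `M` is any matrix with at most `K` distinct rows fitting
`R̂` at least as well as `R` does, then there is an injective labeling `ℓ` of the distinct
rows of `M` by `{1,…,K}` misclassifying at most `(160/c0²)·‖R̂ − R‖_F²` nodes. -/
theorem statement7 (K n : ℕ) (hK : 2 ≤ K) (hn : 1 ≤ n)
    (c0 : ℝ) (hc0 : 0 < c0) (α : ℝ) (hα : 0 < α)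
    (π : Fin n → Fin K)
    (hsize : ∀ k : Fin K, α * n ≤ (Set.ncard {i : Fin n | π i = k} : ℝ))
    (r : Fin K → EuclideanSpace ℝ (Fin (K - 1)))
    (hsep : ∀ k l : Fin K, k ≠ l → Real.sqrt 2 * c0 ≤ dist (r k) (r l))
    (Rhat : Fin n → EuclideanSpace ℝ (Fin (K - 1)))
    (hclose : ∑ i, dist (Rhat i) (r (π i)) ^ 2 < α * n * c0 ^ 2 / 160)
    (M : Fin n → EuclideanSpace ℝ (Fin (K - 1)))
    (hMrows : (Set.range M).ncard ≤ K)
    (hfit : ∑ i, dist (Rhat i) (M i) ^ 2 ≤ ∑ i, dist (Rhat i) (r (π i)) ^ 2) :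
    ∃ ℓ : EuclideanSpace ℝ (Fin (K - 1)) → Fin K,
      Set.InjOn ℓ (Set.range M) ∧
      (Set.ncard {i : Fin n | ℓ (M i) ≠ π i} : ℝ)
        ≤ 160 / c0 ^ 2 * ∑ i, dist (Rhat i) (r (π i)) ^ 2 := by
  classical
  set s : ℝ := Real.sqrt 2 * c0 / 2 with hs_def
  have hsqrt2 : (Real.sqrt 2) ^ 2 = 2 := Real.sq_sqrt (by norm_num)
  have hsqrt2_pos : 0 < Real.sqrt 2 := Real.sqrt_pos.2 (by norm_num)
  have hs_pos : 0 < s := by rw [hs_def]; positivity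
  have hs_sq : s ^ 2 = c0 ^ 2 / 2 := by
    rw [hs_def]; nlinarith [hsqrt2]
  set E : ℝ := ∑ i, dist (Rhat i) (r (π i)) ^ 2 with hE_def
  have hE_nonneg : 0 ≤ E := Finset.sum_nonneg fun i _ => sq_nonneg _
  have hn' : (0:ℝ) < n := by exact_mod_cast Nat.lt_of_lt_of_le Nat.zero_lt_one hn
  have hαn : 0 < α * n := mul_pos hα hn'
  have hc0sq : (0:ℝ) < c0 ^ 2 := by positivity
  -- uniqueness of nearby center
  have huniq : ∀ x k l, dist x (r k) < s → dist x (r l) < s → k = l := by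
    intro x k l hk hl
    by_contra hne
    have h1 := hsep k l hne
    have h2 := dist_triangle (r k) x (r l)
    rw [dist_comm (r k) x] at h2
    rw [hs_def] at hk hl
    linarith
  -- per-node quadratic bound
  have hquad : ∀ i, s ≤ dist (M i) (r (π i)) →
      c0 ^ 2 / 4 ≤ dist (Rhat i) (M i) ^ 2 + dist (Rhat i) (r (π i)) ^ 2 := by
    intro i hi
    have htri : dist (M i) (r (π i)) ≤ dist (Rhat i) (M i) + dist (Rhat i) (r (π i)) := by
      calc dist (M i) (r (π i)) ≤ dist (M i) (Rhat i) + dist (Rhat i) (r (π i)) :=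
            dist_triangle _ _ _
        _ = _ := by rw [dist_comm (M i) (Rhat i)]
    have hab : s ≤ dist (Rhat i) (M i) + dist (Rhat i) (r (π i)) := le_trans hi htri
    nlinarith [sq_nonneg (dist (Rhat i) (M i) - dist (Rhat i) (r (π i))),
      sq_nonneg (dist (Rhat i) (M i) + dist (Rhat i) (r (π i)) - s), hs_sq, hs_pos]
  -- total sum bound
  have htotal : ∑ i, (dist (Rhat i) (M i) ^ 2 + dist (Rhat i) (r (π i)) ^ 2) ≤ 2 * E := by
    rw [Finset.sum_add_distrib]
    rw [hE_def]
    linarith [hfit]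
  -- Step 1: each center has a close row of M
  have hex : ∀ k, ∃ i, dist (M i) (r k) < s := by
    intro k
    by_contra hcon
    push_neg at hcon
    have hsub : ∀ i ∈ Finset.univ.filter (fun i => π i = k),
        c0 ^ 2 / 4 ≤ dist (Rhat i) (M i) ^ 2 + dist (Rhat i) (r (π i)) ^ 2 := by
      intro i hi
      simp only [Finset.mem_filter] at hi
      exact hquad i (by rw [hi.2]; exact hcon i)
    have hcard : α * n ≤ ((Finset.univ.filter (fun i => π i = k)).card : ℝ) := by
      have h := hsize k
      rwa [show {i : Fin n | π i = k} = ↑(Finset.univ.filter (fun i => π i = k)) by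
        ext i; simp, Set.ncard_coe_finset] at h
    have h1 : ((Finset.univ.filter (fun i => π i = k)).card : ℝ) * (c0 ^ 2 / 4)
        ≤ ∑ i ∈ Finset.univ.filter (fun i => π i = k),
          (dist (Rhat i) (M i) ^ 2 + dist (Rhat i) (r (π i)) ^ 2) := by
      have h := Finset.card_nsmul_le_sum _ _ _ hsub
      simpa [nsmul_eq_mul] using h
    have h2 : ∑ i ∈ Finset.univ.filter (fun i => π i = k),
          (dist (Rhat i) (M i) ^ 2 + dist (Rhat i) (r (π i)) ^ 2)
        ≤ ∑ i, (dist (Rhat i) (M i) ^ 2 + dist (Rhat i) (r (π i)) ^ 2) :=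
      Finset.sum_le_sum_of_subset_of_nonneg (Finset.filter_subset _ _)
        (fun i _ _ => by positivity)
    have h3 : α * n * (c0 ^ 2 / 4) ≤ 2 * E := by
      calc α * n * (c0 ^ 2 / 4)
          ≤ ((Finset.univ.filter (fun i => π i = k)).card : ℝ) * (c0 ^ 2 / 4) :=
            mul_le_mul_of_nonneg_right hcard (by positivity)
        _ ≤ _ := le_trans h1 (le_trans h2 htotal)
    rw [hE_def] at h3
    nlinarith [hαn, hc0sq, hclose]
  choose idx hidx using hex
  set m : Fin K → EuclideanSpace ℝ (Fin (K - 1)) := fun k => M (idx k) with hm_def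
  have hm_close : ∀ k, dist (m k) (r k) < s := hidx
  have hm_inj : Function.Injective m := by
    intro k l hkl
    exact huniq (m k) k l (hm_close k) (hkl ▸ hm_close l)
  have hrange_sub : Set.range m ⊆ Set.range M := by
    rintro _ ⟨k, rfl⟩; exact ⟨idx k, rfl⟩
  have hrange_card : (Set.range m).ncard = K := by
    rw [← Set.image_univ, Set.ncard_image_of_injective _ hm_inj, Set.ncard_univ]
    simp
  have hrange_eq : Set.range m = Set.range M :=
    Set.eq_of_subset_of_ncard_le hrange_sub (by rw [hrange_card]; exact hMrows) (Set.finite_range M)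
  set ℓ : EuclideanSpace ℝ (Fin (K - 1)) → Fin K := fun x =>
    if h : ∃ k, dist x (r k) < s then h.choose else ⟨0, by omega⟩ with hℓ_def
  have hℓ_spec : ∀ x k, dist x (r k) < s → ℓ x = k := by
    intro x k hk
    have h : ∃ k, dist x (r k) < s := ⟨k, hk⟩
    simp only [hℓ_def, dif_pos h]
    exact huniq x h.choose k h.choose_spec hk
  refine ⟨ℓ, ?_, ?_⟩
  · intro x hx y hy hxy
    rw [← hrange_eq] at hx hy
    obtain ⟨k, rfl⟩ := hx
    obtain ⟨l, rfl⟩ := hy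
    rw [hℓ_spec _ _ (hm_close k), hℓ_spec _ _ (hm_close l)] at hxy
    exact congrArg m hxy
  · set Bf := Finset.univ.filter (fun i => ℓ (M i) ≠ π i) with hBf
    have hset : {i : Fin n | ℓ (M i) ≠ π i} = ↑Bf := by ext i; simp [hBf]
    rw [hset, Set.ncard_coe_finset]
    have hbad : ∀ i ∈ Bf, c0 ^ 2 / 4 ≤ dist (Rhat i) (M i) ^ 2 + dist (Rhat i) (r (π i)) ^ 2 := by
      intro i hi
      simp only [hBf, Finset.mem_filter] at hi
      have hmem : M i ∈ Set.range m := hrange_eq ▸ Set.mem_range_self i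
      obtain ⟨k, hk⟩ := hmem
      have hdk : dist (M i) (r k) < s := hk ▸ hm_close k
      have hℓk : ℓ (M i) = k := hℓ_spec _ _ hdk
      have hkne : k ≠ π i := by rw [← hℓk]; exact hi.2
      apply hquad
      have h1 := hsep k (π i) hkne
      have h2 := dist_triangle (r k) (M i) (r (π i))
      have h3 : dist (r k) (M i) < s := by rw [dist_comm]; exact hdk
      rw [hs_def] at h3 ⊢
      linarith
    have h1 : (Bf.card : ℝ) * (c0 ^ 2 / 4)
        ≤ ∑ i ∈ Bf, (dist (Rhat i) (M i) ^ 2 + dist (Rhat i) (r (π i)) ^ 2) := by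
      have h := Finset.card_nsmul_le_sum _ _ _ hbad
      simpa [nsmul_eq_mul] using h
    have h2 : ∑ i ∈ Bf, (dist (Rhat i) (M i) ^ 2 + dist (Rhat i) (r (π i)) ^ 2)
        ≤ ∑ i, (dist (Rhat i) (M i) ^ 2 + dist (Rhat i) (r (π i)) ^ 2) :=
      Finset.sum_le_sum_of_subset_of_nonneg (Finset.filter_subset _ _)
        (fun i _ _ => by positivity)
    have hcard2E : (Bf.card : ℝ) * (c0 ^ 2 / 4) ≤ 2 * E := le_trans h1 (le_trans h2 htotal)
    rw [div_mul_eq_mul_div, le_div_iff₀ hc0sq]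
    nlinarith [hE_nonneg, hcard2E]
end

section
/- Let W ∈ ℝ^{n×n}, P ∈ ℝ^{K×K}, and let Π, Π̂ ∈ ℝ^{n×K} be membership matrices, i.e., every row of Π and of Π̂ is a standard basis vector of ℝ^K; write π_i and π̂_i for the i-th rows. Then ‖W ∘ ((Π̂ − Π) P Π̂')‖_F ≤ 2 ‖P‖_max · (max_{1≤i≤n} ‖e_i' W‖₂) · √(#{ i : π̂_i ≠ π_i }), where ∘ is the entrywise product, ‖P‖_max = max_{k,ℓ} |P_{kℓ}|, ‖·‖_F is the Frobenius norm, and e_i' W is the i-th row of W. -/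
open Matrix

/-- misclassification bound for Hadamard-perturbed noise.
For membership matrices `Pm, Pmhat` (rows are standard basis vectors, encoded by the
labelings `π, π̂`), one has
`‖W ∘ ((Π̂ − Π) P Π̂ᵀ)‖_F ≤ 2 ‖P‖_max (max_i ‖eᵢᵀW‖₂) √(#{i : π̂ i ≠ π i})`. -/
theorem statement13 (n K : ℕ)
    (W : Matrix (Fin n) (Fin n) ℝ) (P : Matrix (Fin K) (Fin K) ℝ)
    (π πhat : Fin n → Fin K)
    (Pm Pmhat : Matrix (Fin n) (Fin K) ℝ)
    (hPm : Pm = Matrix.of fun i k => if π i = k then (1 : ℝ) else 0)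
    (hPmhat : Pmhat = Matrix.of fun i k => if πhat i = k then (1 : ℝ) else 0) :
    Real.sqrt (∑ i, ∑ j, (W i j * ((Pmhat - Pm) * P * Pmhatᵀ) i j) ^ 2)
      ≤ 2 * (⨆ k, ⨆ l, |P k l|) * (⨆ i, Real.sqrt (∑ j, W i j ^ 2)) *
          Real.sqrt (Set.ncard {i : Fin n | πhat i ≠ π i}) := by
  classical
  rcases Nat.eq_zero_or_pos n with hn | hn
  · subst hn
    simp
  haveI : Nonempty (Fin n) := ⟨⟨0, hn⟩⟩
  haveI : Nonempty (Fin K) := ⟨π ⟨0, hn⟩⟩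
  set M := ⨆ k, ⨆ l, |P k l| with hMdef
  set R := ⨆ i, Real.sqrt (∑ j, W i j ^ 2) with hRdef
  have hPle : ∀ k l, |P k l| ≤ M := by
    intro k l
    refine le_trans (le_ciSup (f := fun l => |P k l|) (Set.Finite.bddAbove (Set.finite_range _)) l) ?_
    exact le_ciSup (f := fun k => ⨆ l, |P k l|) (Set.Finite.bddAbove (Set.finite_range _)) k
  have hRle : ∀ i, Real.sqrt (∑ j, W i j ^ 2) ≤ R := fun i =>
    le_ciSup (f := fun i => Real.sqrt (∑ j, W i j ^ 2)) (Set.Finite.bddAbove (Set.finite_range _)) i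
  have hM0 : 0 ≤ M := le_trans (abs_nonneg _) (hPle (Classical.arbitrary _) (Classical.arbitrary _))
  have hR0 : 0 ≤ R := le_trans (Real.sqrt_nonneg _) (hRle (Classical.arbitrary _))
  -- entry formula
  have hA : ∀ i j, ((Pmhat - Pm) * P * Pmhatᵀ) i j
      = P (πhat i) (πhat j) - P (π i) (πhat j) := by
    intro i j
    subst hPm hPmhat
    simp [Matrix.mul_apply, Matrix.sub_apply, Matrix.transpose_apply, sub_mul, ite_mul,
      Finset.sum_sub_distrib, mul_ite, Finset.sum_ite_eq', Finset.sum_ite_eq]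
  set T : Finset (Fin n) := Finset.univ.filter (fun i => πhat i ≠ π i) with hT
  have hcard : ({i : Fin n | πhat i ≠ π i} : Set (Fin n)).ncard = T.card := by
    rw [Set.ncard_eq_toFinset_card']
    congr 1
    ext i
    simp [hT]
  rw [hcard]
  have key : ∑ i, ∑ j, (W i j * ((Pmhat - Pm) * P * Pmhatᵀ) i j) ^ 2
      ≤ (2 * M * R) ^ 2 * T.card := by
    have hzero : ∀ i ∈ Finset.univ, i ∉ T →
        (∑ j, (W i j * ((Pmhat - Pm) * P * Pmhatᵀ) i j) ^ 2) = 0 := by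
      intro i _ hi
      simp only [hT, Finset.mem_filter, Finset.mem_univ, true_and, not_not] at hi
      refine Finset.sum_eq_zero fun j _ => ?_
      rw [hA, hi, sub_self, mul_zero]
      ring
    rw [← Finset.sum_subset (Finset.subset_univ T) hzero]
    have hb : ∀ i ∈ T, (∑ j, (W i j * ((Pmhat - Pm) * P * Pmhatᵀ) i j) ^ 2)
        ≤ (2 * M * R) ^ 2 := by
      intro i _
      have h1 : ∀ j, (W i j * ((Pmhat - Pm) * P * Pmhatᵀ) i j) ^ 2
          ≤ (2 * M) ^ 2 * W i j ^ 2 := by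
        intro j
        have habs : |((Pmhat - Pm) * P * Pmhatᵀ) i j| ≤ 2 * M := by
          rw [hA]
          calc |P (πhat i) (πhat j) - P (π i) (πhat j)|
              ≤ |P (πhat i) (πhat j)| + |P (π i) (πhat j)| := abs_sub _ _
            _ ≤ M + M := add_le_add (hPle _ _) (hPle _ _)
            _ = 2 * M := by ring
        have : (W i j * ((Pmhat - Pm) * P * Pmhatᵀ) i j) ^ 2
            = W i j ^ 2 * (((Pmhat - Pm) * P * Pmhatᵀ) i j) ^ 2 := by ring
        rw [this]
        have h2 : (((Pmhat - Pm) * P * Pmhatᵀ) i j) ^ 2 ≤ (2 * M) ^ 2 := by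
          rw [← sq_abs]
          exact pow_le_pow_left₀ (abs_nonneg _) habs 2
        calc W i j ^ 2 * (((Pmhat - Pm) * P * Pmhatᵀ) i j) ^ 2
            ≤ W i j ^ 2 * (2 * M) ^ 2 := by
              exact mul_le_mul_of_nonneg_left h2 (sq_nonneg _)
          _ = (2 * M) ^ 2 * W i j ^ 2 := by ring
      calc (∑ j, (W i j * ((Pmhat - Pm) * P * Pmhatᵀ) i j) ^ 2)
          ≤ ∑ j, (2 * M) ^ 2 * W i j ^ 2 := Finset.sum_le_sum fun j _ => h1 j
        _ = (2 * M) ^ 2 * ∑ j, W i j ^ 2 := by rw [Finset.mul_sum]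
        _ ≤ (2 * M) ^ 2 * R ^ 2 := by
            refine mul_le_mul_of_nonneg_left ?_ (sq_nonneg _)
            have := hRle i
            have hnn : 0 ≤ ∑ j, W i j ^ 2 := Finset.sum_nonneg fun j _ => sq_nonneg _
            calc ∑ j, W i j ^ 2 = (Real.sqrt (∑ j, W i j ^ 2)) ^ 2 := (Real.sq_sqrt hnn).symm
              _ ≤ R ^ 2 := pow_le_pow_left₀ (Real.sqrt_nonneg _) this 2
        _ = (2 * M * R) ^ 2 := by ring
    calc ∑ i ∈ T, ∑ j, (W i j * ((Pmhat - Pm) * P * Pmhatᵀ) i j) ^ 2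
        ≤ ∑ i ∈ T, (2 * M * R) ^ 2 := Finset.sum_le_sum hb
      _ = (2 * M * R) ^ 2 * T.card := by rw [Finset.sum_const, nsmul_eq_mul]; ring
  have h2MR : 0 ≤ 2 * M * R := by positivity
  calc Real.sqrt (∑ i, ∑ j, (W i j * ((Pmhat - Pm) * P * Pmhatᵀ) i j) ^ 2)
      ≤ Real.sqrt ((2 * M * R) ^ 2 * T.card) := Real.sqrt_le_sqrt key
    _ = (2 * M * R) * Real.sqrt T.card := by
        rw [Real.sqrt_mul (sq_nonneg _), Real.sqrt_sq h2MR]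
    _ = 2 * M * R * Real.sqrt T.card := by ring
end

section
/- Let A be a real n × n matrix with all entries in [0, 1], let i ∈ {1,…,n}, and let S and Ŝ be subsets of {1,…,n} \ {i}. Then | ∑_{j ≠ t, j,t ∈ Ŝ} A_{ij}(1 − A_{jt}) A_{ti} − ∑_{j ≠ t, j,t ∈ S} A_{ij}(1 − A_{jt}) A_{ti} | ≤ 2 · (∑_{j ≠ i} A_{ij}) · |S △ Ŝ|, where S △ Ŝ denotes the symmetric difference of the two index sets and both sums are over ordered pairs of distinct indices. -/
open scoped symmDiff

/-- stability of the alternating 3-cycle count.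
For a symmetric adjacency-type matrix `A` with entries in `[0,1]`, a node `i`, and index
sets `S, Ŝ ⊆ {1,…,n} \ {i}`, replacing `S` by `Ŝ` in the alternating 3-cycle count
centered at `i` changes it by at most `2 (∑_{j ≠ i} A_{ij}) |S △ Ŝ|`.
(Symmetry of `A` is part of the adjacency-matrix context.) -/
theorem statement14 (n : ℕ) (A : Matrix (Fin n) (Fin n) ℝ)
    (hA : A.IsSymm)
    (hA01 : ∀ i j, A i j ∈ Set.Icc (0 : ℝ) 1)
    (i : Fin n) (S Shat : Finset (Fin n)) (hiS : i ∉ S) (hiShat : i ∉ Shat) :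
    |(∑ j ∈ Shat, ∑ t ∈ Shat.erase j, A i j * (1 - A j t) * A t i)
        - ∑ j ∈ S, ∑ t ∈ S.erase j, A i j * (1 - A j t) * A t i|
      ≤ 2 * (∑ j ∈ Finset.univ.erase i, A i j) * ((S ∆ Shat).card : ℝ) := by
  classical
  set g : Fin n → Fin n → ℝ := fun j t => A i j * (1 - A j t) * A t i with hgdef
  have hsymm : ∀ j t : Fin n, A t j = A j t := fun j t => hA.apply j t
  have hg0 : ∀ j t, 0 ≤ g j t := by
    intro j t
    have h1 := hA01 i j; have h2 := hA01 j t; have h3 := hA01 t i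
    simp only [Set.mem_Icc] at h1 h2 h3
    have : (0:ℝ) ≤ 1 - A j t := by linarith
    exact mul_nonneg (mul_nonneg h1.1 this) h3.1
  have hgle1 : ∀ j t, g j t ≤ A t i := by
    intro j t
    have h1 := hA01 i j; have h2 := hA01 j t; have h3 := hA01 t i
    simp only [Set.mem_Icc] at h1 h2 h3
    have h4 : (0:ℝ) ≤ 1 - A j t := by linarith
    have h5 : A i j * (1 - A j t) ≤ 1 := by nlinarith
    show A i j * (1 - A j t) * A t i ≤ A t i
    calc A i j * (1 - A j t) * A t i ≤ 1 * A t i :=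
          mul_le_mul_of_nonneg_right h5 h3.1
      _ = A t i := one_mul _
  have hgle2 : ∀ j t, g j t ≤ A i j := by
    intro j t
    have h1 := hA01 i j; have h2 := hA01 j t; have h3 := hA01 t i
    simp only [Set.mem_Icc] at h1 h2 h3
    have h4 : (0:ℝ) ≤ 1 - A j t := by linarith
    have h5 : (1 - A j t) * A t i ≤ 1 := by nlinarith
    show A i j * (1 - A j t) * A t i ≤ A i j
    calc A i j * (1 - A j t) * A t i = A i j * ((1 - A j t) * A t i) := by ring
      _ ≤ A i j * 1 := mul_le_mul_of_nonneg_left h5 h1.1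
      _ = A i j := mul_one _
  set U : Finset (Fin n) := Finset.univ.erase i with hUdef
  set Δ : Finset (Fin n) := S ∆ Shat with hΔdef
  set R : ℝ := ∑ j ∈ U, A i j with hRdef
  have hR0 : 0 ≤ R := Finset.sum_nonneg fun j _ => (hA01 i j).1
  set f : Fin n × Fin n → ℝ := fun p => g p.1 p.2 with hfdef
  set B : Finset (Fin n × Fin n) := (Shat ×ˢ Shat).filter (fun p => p.2 ≠ p.1) with hBdef
  set C : Finset (Fin n × Fin n) := (S ×ˢ S).filter (fun p => p.2 ≠ p.1) with hCdef
  have hprod : ∀ T : Finset (Fin n),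
      (∑ j ∈ T, ∑ t ∈ T.erase j, g j t)
        = ∑ p ∈ (T ×ˢ T).filter (fun p => p.2 ≠ p.1), f p := by
    intro T
    rw [Finset.sum_filter, Finset.sum_product]
    refine Finset.sum_congr rfl fun j _ => ?_
    rw [← Finset.filter_ne' T j, Finset.sum_filter]
  have hf0 : ∀ p : Fin n × Fin n, 0 ≤ f p := fun p => hg0 p.1 p.2
  -- difference bounded by sum over symmetric difference of pair sets
  have hBC : |∑ p ∈ B, f p - ∑ p ∈ C, f p| ≤ ∑ p ∈ B ∆ C, f p := by
    have h1 : ∑ p ∈ B, f p - ∑ p ∈ C, f p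
        = ∑ p ∈ B \ C, f p - ∑ p ∈ C \ B, f p := by
      have hB' := Finset.sum_inter_add_sum_sdiff B C f
      have hC' := Finset.sum_inter_add_sum_sdiff C B f
      rw [Finset.inter_comm] at hC'
      linarith
    have hsd : B ∆ C = (B \ C) ∪ (C \ B) := rfl
    rw [h1, hsd,
      Finset.sum_union (disjoint_sdiff_sdiff)]
    have h2 : 0 ≤ ∑ p ∈ B \ C, f p := Finset.sum_nonneg fun p _ => hf0 p
    have h3 : 0 ≤ ∑ p ∈ C \ B, f p := Finset.sum_nonneg fun p _ => hf0 p
    rw [abs_sub_le_iff]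
    constructor <;> linarith
  have hSU : S ⊆ U := fun x hx => Finset.mem_erase.2
    ⟨fun h => hiS (h ▸ hx), Finset.mem_univ x⟩
  have hShatU : Shat ⊆ U := fun x hx => Finset.mem_erase.2
    ⟨fun h => hiShat (h ▸ hx), Finset.mem_univ x⟩
  have hsub : B ∆ C ⊆ (Δ ×ˢ U) ∪ (U ×ˢ Δ) := by
    intro p hp
    rw [Finset.mem_symmDiff] at hp
    rcases hp with ⟨hpB, hpC⟩ | ⟨hpC, hpB⟩
    · rw [hBdef, Finset.mem_filter, Finset.mem_product] at hpB
      rw [hCdef, Finset.mem_filter, Finset.mem_product] at hpC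
      obtain ⟨⟨h1, h2⟩, hne⟩ := hpB
      by_cases hS1 : p.1 ∈ S
      · have hS2 : p.2 ∉ S := fun h => hpC ⟨⟨hS1, h⟩, hne⟩
        refine Finset.mem_union_right _ (Finset.mem_product.2 ⟨hShatU h1, ?_⟩)
        rw [hΔdef, Finset.mem_symmDiff]; exact Or.inr ⟨h2, hS2⟩
      · refine Finset.mem_union_left _ (Finset.mem_product.2 ⟨?_, hShatU h2⟩)
        rw [hΔdef, Finset.mem_symmDiff]; exact Or.inr ⟨h1, hS1⟩
    · rw [hCdef, Finset.mem_filter, Finset.mem_product] at hpC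
      rw [hBdef, Finset.mem_filter, Finset.mem_product] at hpB
      obtain ⟨⟨h1, h2⟩, hne⟩ := hpC
      by_cases hS1 : p.1 ∈ Shat
      · have hS2 : p.2 ∉ Shat := fun h => hpB ⟨⟨hS1, h⟩, hne⟩
        refine Finset.mem_union_right _ (Finset.mem_product.2 ⟨hSU h1, ?_⟩)
        rw [hΔdef, Finset.mem_symmDiff]; exact Or.inl ⟨h2, hS2⟩
      · refine Finset.mem_union_left _ (Finset.mem_product.2 ⟨?_, hSU h2⟩)
        rw [hΔdef, Finset.mem_symmDiff]; exact Or.inl ⟨h1, hS1⟩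
  have hsum_sub : ∑ p ∈ B ∆ C, f p ≤ ∑ p ∈ (Δ ×ˢ U) ∪ (U ×ˢ Δ), f p :=
    Finset.sum_le_sum_of_subset_of_nonneg hsub (fun p _ _ => hf0 p)
  have hunion : ∑ p ∈ (Δ ×ˢ U) ∪ (U ×ˢ Δ), f p
      ≤ ∑ p ∈ Δ ×ˢ U, f p + ∑ p ∈ U ×ˢ Δ, f p := by
    have := Finset.sum_union_inter (s₁ := Δ ×ˢ U) (s₂ := U ×ˢ Δ) (f := f)
    have hnn : 0 ≤ ∑ p ∈ (Δ ×ˢ U) ∩ (U ×ˢ Δ), f p :=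
      Finset.sum_nonneg fun p _ => hf0 p
    linarith
  have hbound1 : ∑ p ∈ Δ ×ˢ U, f p ≤ (Δ.card : ℝ) * R := by
    rw [Finset.sum_product]
    calc ∑ j ∈ Δ, ∑ t ∈ U, g j t
        ≤ ∑ j ∈ Δ, ∑ t ∈ U, A i t := by
          exact Finset.sum_le_sum fun j _ => Finset.sum_le_sum fun t _ =>
            (hgle1 j t).trans_eq (hsymm t i).symm
      _ = (Δ.card : ℝ) * R := by
          rw [Finset.sum_const, nsmul_eq_mul]
  have hbound2 : ∑ p ∈ U ×ˢ Δ, f p ≤ (Δ.card : ℝ) * R := by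
    rw [Finset.sum_product]
    calc ∑ j ∈ U, ∑ t ∈ Δ, g j t
        ≤ ∑ j ∈ U, ∑ _t ∈ Δ, A i j := by
          exact Finset.sum_le_sum fun j _ => Finset.sum_le_sum fun t _ => hgle2 j t
      _ = (Δ.card : ℝ) * R := by
          simp only [Finset.sum_const, nsmul_eq_mul]
          rw [← Finset.mul_sum]
  rw [hprod Shat, hprod S]
  calc |∑ p ∈ B, f p - ∑ p ∈ C, f p|
      ≤ ∑ p ∈ B ∆ C, f p := hBC
    _ ≤ ∑ p ∈ (Δ ×ˢ U) ∪ (U ×ˢ Δ), f p := hsum_sub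
    _ ≤ ∑ p ∈ Δ ×ˢ U, f p + ∑ p ∈ U ×ˢ Δ, f p := hunion
    _ ≤ (Δ.card : ℝ) * R + (Δ.card : ℝ) * R := add_le_add hbound1 hbound2
    _ = 2 * R * (Δ.card : ℝ) := by ring
end
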